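/- In the setting of the half-return map P_R with T_R ∈ (0, π/ω_R), the derivative satisfies dP_R/dq = −ρ(ω_R T_R; λ_R/ω_R)/ρ(ω_R T_R; −λ_R/ω_R) = ((q − ζ_R)/(P_R − ζ_R)) e^{2 λ_R T_R}; in particular, since P_R(q) < ζ_R < q, we have dP_R/dq < 0, i.e., P_R is strictly decreasing. -/

import Mathlib

open Set Real

/-- The auxiliary function ρ(s; ν) = 1 − e^{νs}(cos s − ν sin s). -/
noncomputable def rho (s ν : ℝ) : ℝ := 1 - Real.exp (ν * s) * (Real.cos s - ν * Real.sin s)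

lemma numF (lamR omR ξR : ℝ) (hω : omR ≠ 0) (u : ℝ) :
    ξR * Real.exp (-lamR*u) * rho (omR*u) (lamR/omR)
      = ξR * (Real.exp (-lamR*u) - Real.cos (omR*u) + lamR/omR * Real.sin (omR*u)) := by
  unfold rho
  have hνs : lamR/omR * (omR*u) = lamR * u := by field_simp
  rw [hνs]
  have h2 : Real.exp (-lamR*u) * Real.exp (lamR*u) = 1 := by
    rw [← Real.exp_add]; ring_nf; exact Real.exp_zero
  linear_combination (-(ξR*(Real.cos (omR*u) - lamR/omR*Real.sin (omR*u)))) * h2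

lemma numG (lamR omR ξR : ℝ) (hω : omR ≠ 0) (u : ℝ) :
    -ξR * Real.exp (lamR*u) * rho (omR*u) (-lamR/omR)
      = ξR * (Real.cos (omR*u) + lamR/omR * Real.sin (omR*u) - Real.exp (lamR*u)) := by
  unfold rho
  have hνs : -lamR/omR * (omR*u) = -(lamR * u) := by field_simp
  rw [hνs]
  have h2 : Real.exp (lamR*u) * Real.exp (-(lamR*u)) = 1 := by
    rw [← Real.exp_add]; ring_nf; exact Real.exp_zero
  linear_combination (ξR*(Real.cos (omR*u) + lamR/omR*Real.sin (omR*u))) * h2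

lemma cleanF (lamR omR ξR t : ℝ) (hω : omR ≠ 0) (hs : Real.sin (omR*t) ≠ 0) :
    ((ξR * ((Real.exp (-lamR*t) * -lamR - (-Real.sin (omR*t) * omR)) + lamR/omR * (Real.cos (omR*t) * omR)))
        * Real.sin (omR*t)
      - (ξR * (Real.exp (-lamR*t) - Real.cos (omR*t) + lamR/omR * Real.sin (omR*t))) * (Real.cos (omR*t) * omR))
      / Real.sin (omR*t) ^ 2
    = ξR * (omR - Real.exp (-lamR*t) * (lamR * Real.sin (omR*t) + omR * Real.cos (omR*t))) / Real.sin (omR*t) ^ 2 := by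
  have hpy := Real.sin_sq_add_cos_sq (omR*t)
  congr 1
  linear_combination (ξR * omR) * hpy

lemma cleanG (lamR omR ξR t : ℝ) (hω : omR ≠ 0) (hs : Real.sin (omR*t) ≠ 0) :
    ((ξR * ((-Real.sin (omR*t) * omR + lamR/omR * (Real.cos (omR*t) * omR)) - Real.exp (lamR*t) * lamR))
        * Real.sin (omR*t)
      - (ξR * (Real.cos (omR*t) + lamR/omR * Real.sin (omR*t) - Real.exp (lamR*t))) * (Real.cos (omR*t) * omR))
      / Real.sin (omR*t) ^ 2
    = ξR * (Real.exp (lamR*t) * (omR * Real.cos (omR*t) - lamR * Real.sin (omR*t)) - omR) / Real.sin (omR*t) ^ 2 := by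
  have hpy := Real.sin_sq_add_cos_sq (omR*t)
  congr 1
  linear_combination (-(ξR * omR)) * hpy

lemma ratioFG (lamR omR ξR E Ei c s rp rm : ℝ) (hω : omR ≠ 0) (hs : s ≠ 0) (hrm : rm ≠ 0)
    (hEEi : E * Ei = 1)
    (hrp : rp = 1 - E * (c - lamR/omR * s))
    (hrmdef : rm = 1 - Ei * (c + lamR/omR * s)) :
    ξR * (E * (omR * c - lamR * s) - omR) / s^2
      = -(rp / rm) * (ξR * (omR - Ei * (lamR * s + omR * c)) / s^2) := by
  have key : (ξR * (E * (omR * c - lamR * s) - omR)) * rm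
      = -rp * (ξR * (omR - Ei * (lamR * s + omR * c))) := by
    subst hrp hrmdef
    field_simp
    linear_combination (ξR * ((omR*c - lamR*s)*(c*omR + lamR*s) - (c*omR - lamR*s)*(lamR*s + omR*c))) * hEEi
  rw [neg_mul, div_mul_div_comm, ← neg_div, div_eq_div_iff (pow_ne_zero 2 hs) (mul_ne_zero hrm (pow_ne_zero 2 hs))]
  linear_combination s^2 * key

/-- Derivative of the half-return map:
`dP_R/dq = −ρ(ω T; λ/ω)/ρ(ω T; −λ/ω) = ((q−ζ_R)/(P_R−ζ_R)) e^{2λT}`, which is negative,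
so `P_R` is strictly decreasing. -/
theorem stmt_13 (lamR omR ξR ζR : ℝ) (hlamR : lamR < 0) (homR : omR > 0) (hξR : ξR > 0)
    (T P : ℝ → ℝ)
    (hrange : ∀ q ∈ Ioi ζR, T q ∈ Ioo 0 (Real.pi / omR))
    (horder : ∀ q ∈ Ioi ζR, P q < ζR)
    (himpT : ∀ q ∈ Ioi ζR,
      q - ζR = ξR * Real.exp (-lamR * T q) * rho (omR * T q) (lamR / omR)
                 / Real.sin (omR * T q))
    (himpP : ∀ q ∈ Ioi ζR,
      P q - ζR = -ξR * Real.exp (lamR * T q) * rho (omR * T q) (-lamR / omR)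
                 / Real.sin (omR * T q))
    (hdiff : ∀ q ∈ Ioi ζR, DifferentiableAt ℝ T q) :
    (∀ q ∈ Ioi ζR,
      HasDerivAt P ((q - ζR) / (P q - ζR) * Real.exp (2 * lamR * T q)) q) ∧
    (∀ q ∈ Ioi ζR,
      (q - ζR) / (P q - ζR) * Real.exp (2 * lamR * T q) =
        -(rho (omR * T q) (lamR / omR) / rho (omR * T q) (-lamR / omR))) ∧
    (∀ q ∈ Ioi ζR,
      (q - ζR) / (P q - ζR) * Real.exp (2 * lamR * T q) < 0) ∧
    StrictAntiOn P (Ioi ζR) := by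
  have hω : omR ≠ 0 := ne_of_gt homR
  have hξ : ξR ≠ 0 := ne_of_gt hξR
  have hsin : ∀ q ∈ Ioi ζR, 0 < Real.sin (omR * T q) := by
    intro q hq
    obtain ⟨h1, h2⟩ := hrange q hq
    apply Real.sin_pos_of_pos_of_lt_pi (by positivity)
    calc omR * T q = T q * omR := mul_comm _ _
    _ < Real.pi := (lt_div_iff₀ homR).mp h2
  have hrm : ∀ q ∈ Ioi ζR, rho (omR * T q) (-lamR/omR) ≠ 0 := by
    intro q hq h0
    have h1 := himpP q hq
    rw [h0] at h1
    simp at h1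
    have := horder q hq
    linarith
  -- part 2
  have key2 : ∀ q ∈ Ioi ζR, (q - ζR) / (P q - ζR) * Real.exp (2 * lamR * T q)
      = -(rho (omR * T q) (lamR / omR) / rho (omR * T q) (-lamR / omR)) := by
    intro q hq
    rw [himpT q hq, himpP q hq]
    have hs : Real.sin (omR * T q) ≠ 0 := (hsin q hq).ne'
    have hrm' := hrm q hq
    have hEi : Real.exp (-lamR * T q) = (Real.exp (lamR * T q))⁻¹ := by
      rw [← Real.exp_neg]; ring_nf
    have hE2 : Real.exp (2 * lamR * T q) = Real.exp (lamR * T q) * Real.exp (lamR * T q) := by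
      rw [← Real.exp_add]; ring_nf
    have hE : Real.exp (lamR * T q) ≠ 0 := Real.exp_ne_zero _
    rw [hEi, hE2]
    field_simp
    rw [mul_comm (Real.sin _) (rho _ _), mul_div_mul_right _ _ (by rwa [mul_comm] at hs)]
  -- part 3
  have key3 : ∀ q ∈ Ioi ζR,
      (q - ζR) / (P q - ζR) * Real.exp (2 * lamR * T q) < 0 := by
    intro q hq
    have h1 : 0 < q - ζR := sub_pos.mpr hq
    have h2 : P q - ζR < 0 := sub_neg.mpr (horder q hq)
    exact mul_neg_of_neg_of_pos (div_neg_of_pos_of_neg h1 h2) (Real.exp_pos _)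
  -- part 1
  have key1 : ∀ q ∈ Ioi ζR,
      HasDerivAt P ((q - ζR) / (P q - ζR) * Real.exp (2 * lamR * T q)) q := by
    intro q hq
    have hq' : ζR < q := hq
    have hs : Real.sin (omR * T q) ≠ 0 := (hsin q hq).ne'
    have hrm' := hrm q hq
    have hTd : HasDerivAt T (deriv T q) q := (hdiff q hq).hasDerivAt
    set t := T q with ht
    have hlin : HasDerivAt (fun u : ℝ => omR * u) omR t := by
      simpa using (hasDerivAt_id t).const_mul omR
    have hexpm : HasDerivAt (fun u : ℝ => Real.exp (-lamR * u)) (Real.exp (-lamR*t) * -lamR) t := by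
      simpa using ((hasDerivAt_id t).const_mul (-lamR)).exp
    have hexpp : HasDerivAt (fun u : ℝ => Real.exp (lamR * u)) (Real.exp (lamR*t) * lamR) t := by
      simpa using ((hasDerivAt_id t).const_mul lamR).exp
    have hcos : HasDerivAt (fun u : ℝ => Real.cos (omR * u)) (-Real.sin (omR*t) * omR) t := hlin.cos
    have hsin' : HasDerivAt (fun u : ℝ => Real.sin (omR * u)) (Real.cos (omR*t) * omR) t := hlin.sin
    -- F
    have hFnum : HasDerivAt
        (fun u : ℝ => ξR * (Real.exp (-lamR*u) - Real.cos (omR*u) + lamR/omR * Real.sin (omR*u)))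
        (ξR * ((Real.exp (-lamR*t) * -lamR - (-Real.sin (omR*t) * omR)) + lamR/omR * (Real.cos (omR*t) * omR))) t :=
      ((hexpm.sub hcos).add (hsin'.const_mul (lamR/omR))).const_mul ξR
    have hFd := hFnum.div hsin' hs
    rw [cleanF lamR omR ξR t hω hs] at hFd
    have hFq := hFd.comp q hTd
    have heqF : (fun x => x - ζR) =ᶠ[nhds q]
        (fun x => ξR * (Real.exp (-lamR * T x) - Real.cos (omR * T x) + lamR/omR * Real.sin (omR * T x))
          / Real.sin (omR * T x)) := by
      filter_upwards [Ioi_mem_nhds hq'] with x hx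
      rw [himpT x hx, numF lamR omR ξR hω (T x)]
    have hFid : HasDerivAt (fun x => x - ζR)
        (ξR * (omR - Real.exp (-lamR*t) * (lamR * Real.sin (omR*t) + omR * Real.cos (omR*t)))
          / Real.sin (omR*t) ^ 2 * deriv T q) q := by
      refine HasDerivAt.congr_of_eventuallyEq ?_ heqF
      simpa [Function.comp_def, Pi.div_def] using hFq
    have hone : ξR * (omR - Real.exp (-lamR*t) * (lamR * Real.sin (omR*t) + omR * Real.cos (omR*t)))
          / Real.sin (omR*t) ^ 2 * deriv T q = 1 :=
      hFid.unique ((hasDerivAt_id q).sub_const ζR)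
    -- G
    have hGnum : HasDerivAt
        (fun u : ℝ => ξR * (Real.cos (omR*u) + lamR/omR * Real.sin (omR*u) - Real.exp (lamR*u)))
        (ξR * ((-Real.sin (omR*t) * omR + lamR/omR * (Real.cos (omR*t) * omR)) - Real.exp (lamR*t) * lamR)) t :=
      ((hcos.add (hsin'.const_mul (lamR/omR))).sub hexpp).const_mul ξR
    have hGd := hGnum.div hsin' hs
    rw [cleanG lamR omR ξR t hω hs] at hGd
    have hGq := hGd.comp q hTd
    have hPeq : P =ᶠ[nhds q]
        (fun x => ζR + ξR * (Real.cos (omR * T x) + lamR/omR * Real.sin (omR * T x) - Real.exp (lamR * T x))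
          / Real.sin (omR * T x)) := by
      filter_upwards [Ioi_mem_nhds hq'] with x hx
      have h := himpP x hx
      rw [numG lamR omR ξR hω (T x)] at h
      linarith
    have hPd : HasDerivAt P
        (ξR * (Real.exp (lamR*t) * (omR * Real.cos (omR*t) - lamR * Real.sin (omR*t)) - omR)
          / Real.sin (omR*t) ^ 2 * deriv T q) q := by
      refine HasDerivAt.congr_of_eventuallyEq ?_ hPeq
      simpa [Function.comp_def, Pi.div_def] using hGq.const_add ζR
    -- identify the derivative value
    have hval : ξR * (Real.exp (lamR*t) * (omR * Real.cos (omR*t) - lamR * Real.sin (omR*t)) - omR)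
          / Real.sin (omR*t) ^ 2 * deriv T q
        = (q - ζR) / (P q - ζR) * Real.exp (2 * lamR * T q) := by
      rw [key2 q hq, ← ht]
      have hratio := ratioFG lamR omR ξR (Real.exp (lamR*t)) (Real.exp (-lamR*t))
        (Real.cos (omR*t)) (Real.sin (omR*t))
        (rho (omR*t) (lamR/omR)) (rho (omR*t) (-lamR/omR)) hω hs hrm'
        (by rw [← Real.exp_add]; ring_nf; exact Real.exp_zero)
        (by unfold rho
            have : lamR/omR * (omR*t) = lamR * t := by field_simp
            rw [this])
        (by unfold rho
            have : -lamR/omR * (omR*t) = -(lamR * t) := by field_simp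
            rw [this]; ring_nf)
      rw [hratio, mul_assoc, hone, mul_one]
    rw [← hval]
    exact hPd
  refine ⟨key1, key2, key3, ?_⟩
  apply strictAntiOn_of_deriv_neg (convex_Ioi ζR)
  · exact fun x hx => ((key1 x hx).differentiableAt.continuousAt).continuousWithinAt
  · intro x hx
    rw [interior_Ioi] at hx
    rw [(key1 x hx).deriv]
    exact key3 x hx
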